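/- Let G be an edge-coloured graph on n vertices with at least (9/8)n colour classes, each of size at least n/3. Then G contains a rainbow triangle. -/

import Mathlib

set_option linter.unusedSectionVars false

open Finset

namespace RTaux

variable {V : Type*} [Fintype V] [DecidableEq V] (G : SimpleGraph V) [DecidableRel G.Adj]
variable {ι : Type*} [Fintype ι] [DecidableEq ι] (col : Sym2 V → ι)

/-- the `j`-coloured neighbourhood of `v`. -/
def Nd (j : ι) (v : V) : Finset V :=
  (G.neighborFinset v).filter (fun u => col s(v, u) = j)

/-- the `j`-coloured degree of `v`. -/
def dj (j : ι) (v : V) : ℕ := (Nd G col j v).card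

/-- size of colour class `j`. -/
def mE (j : ι) : ℕ := (G.edgeFinset.filter (fun e => col e = j)).card

lemma mem_Nd {j : ι} {v u : V} : u ∈ Nd G col j v ↔ G.Adj v u ∧ col s(v, u) = j := by
  simp [Nd, SimpleGraph.mem_neighborFinset]

lemma Nd_symm {j : ι} {v u : V} : u ∈ Nd G col j v ↔ v ∈ Nd G col j u := by
  rw [mem_Nd, mem_Nd, G.adj_comm, Sym2.eq_swap]

/-- handshake for a colour class -/
lemma sum_dj (j : ι) : ∑ v, dj G col j v = 2 * mE G col j := by
  classical
  -- ordered pairs of the class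
  set D : Finset (V × V) :=
    univ.filter (fun p => G.Adj p.1 p.2 ∧ col s(p.1, p.2) = j) with hD
  have h1 : ∑ v, dj G col j v = D.card := by
    rw [Finset.card_eq_sum_card_fiberwise (f := Prod.fst) (t := univ)
      (fun x _ => mem_univ _)]
    refine Finset.sum_congr rfl (fun v _ => ?_)
    rw [dj]
    apply Finset.card_bij (fun u _ => (v, u))
    · intro u hu
      rw [mem_Nd] at hu
      simp [hD, hu.1, hu.2]
    · intro a ha b hb hab
      simpa using hab
    · rintro ⟨a, b⟩ hp
      simp only [hD, mem_filter, mem_univ, true_and] at hp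
      obtain ⟨⟨hadj, hcol⟩, rfl⟩ := hp
      exact ⟨b, by rw [mem_Nd]; exact ⟨hadj, hcol⟩, rfl⟩
  have h2 : D.card = 2 * mE G col j := by
    rw [mE, Finset.card_eq_sum_card_fiberwise (f := fun p => s(p.1, p.2))
      (t := G.edgeFinset.filter (fun e => col e = j)) ?_]
    · rw [Finset.sum_congr rfl (g := fun _ => 2) ?_, Finset.sum_const, smul_eq_mul, mul_comm]
      intro eedge he
      simp only [mem_filter, SimpleGraph.mem_edgeFinset] at he
      induction eedge with
      | _ a b =>
        have hab : G.Adj a b := he.1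
        have hcol : col s(a, b) = j := he.2
        have : (D.filter (fun p => s(p.1, p.2) = s(a, b))) = {(a, b), (b, a)} := by
          ext ⟨x, y⟩
          simp only [hD, mem_filter, mem_univ, true_and, mem_insert, mem_singleton,
            Prod.mk.injEq]
          constructor
          · rintro ⟨-, hxy⟩
            rw [Sym2.eq_iff] at hxy
            tauto
          · rintro (⟨rfl, rfl⟩ | ⟨rfl, rfl⟩)
            · exact ⟨⟨hab, hcol⟩, rfl⟩
            · exact ⟨⟨hab.symm, by rw [Sym2.eq_swap]; exact hcol⟩, Sym2.eq_swap⟩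
        rw [this, Finset.card_insert_of_notMem, Finset.card_singleton]
        simp only [mem_singleton, Prod.mk.injEq, not_and]
        intro h; exact absurd h hab.ne
    · rintro ⟨a, b⟩ hp
      simp only [hD, mem_coe, mem_filter, mem_univ, true_and] at hp
      simp [SimpleGraph.mem_edgeFinset, hp.1, hp.2]
  rw [h1, h2]


/-- common neighbours -/
def cmn (v u : V) : Finset V := univ.filter (fun w => G.Adj w v ∧ G.Adj w u)

def cdg (v u : V) : ℕ := (cmn G v u).card

def monoc (v u : V) : ℕ :=
  ((cmn G v u).filter (fun w => col s(w, v) = col s(w, u))).card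

def src (v u : V) : ℕ :=
  ((cmn G v u).filter (fun w => ¬ col s(w, v) = col s(w, u))).card

def S (j : ι) : ℕ := ∑ w, (dj G col j w) ^ 2

lemma cdg_split (v u : V) : cdg G v u = monoc G col v u + src G col v u :=
  (Finset.card_filter_add_card_filter_not _).symm

lemma cmn_eq (v u : V) : cmn G v u = G.neighborFinset v ∩ G.neighborFinset u := by
  ext w
  simp [cmn, SimpleGraph.mem_neighborFinset, G.adj_comm]

/-- codegree lower bound -/
lemma deg_le_cdg (v u : V) :
    G.degree v + G.degree u ≤ Fintype.card V + cdg G v u := by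
  have h := Finset.card_union_add_card_inter (G.neighborFinset v) (G.neighborFinset u)
  have h2 : (G.neighborFinset v ∪ G.neighborFinset u).card ≤ Fintype.card V := by
    simpa using Finset.card_le_univ (G.neighborFinset v ∪ G.neighborFinset u)
  rw [cdg, cmn_eq, ← G.card_neighborFinset_eq_degree v, ← G.card_neighborFinset_eq_degree u]
  omega

lemma pairs_sq (s : Finset V) (f : V → ι) :
    (∑ v, ∑ u, (if v ∈ s ∧ u ∈ s ∧ f v = f u then (1:ℕ) else 0))
      = ∑ j, ((s.filter (fun v => f v = j)).card) ^ 2 := by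
  have e1 : (∑ v, ∑ u, (if v ∈ s ∧ u ∈ s ∧ f v = f u then (1:ℕ) else 0))
      = ∑ v ∈ s, ∑ u ∈ s, (if f v = f u then (1:ℕ) else 0) := by
    rw [← Finset.sum_subset (Finset.subset_univ s)
      (fun v _ hv => by simp [hv])]
    refine Finset.sum_congr rfl (fun v hv => ?_)
    rw [← Finset.sum_subset (Finset.subset_univ s)
      (fun u _ hu => by simp [hu])]
    exact Finset.sum_congr rfl (fun u hu => by simp [hv, hu])
  rw [e1]
  have e2 : ∀ v ∈ s, (∑ u ∈ s, if f v = f u then (1:ℕ) else 0)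
      = (s.filter (fun u => f v = f u)).card :=
    fun v _ => (Finset.card_filter _ _).symm
  rw [Finset.sum_congr rfl e2]
  rw [← Finset.sum_fiberwise_of_maps_to (g := f) (t := univ)
    (fun v _ => mem_univ _) (fun v => (s.filter (fun u => f v = f u)).card)]
  refine Finset.sum_congr rfl (fun j _ => ?_)
  rw [sq]
  rw [Finset.sum_congr rfl (fun v hv => ?_), Finset.sum_const, smul_eq_mul]
  have hfv : f v = j := (Finset.mem_filter.1 hv).2
  exact congrArg Finset.card (Finset.filter_congr (fun u _ => by rw [hfv, eq_comm]))

lemma full_eq : (∑ v, ∑ u, monoc G col v u) = ∑ j, S G col j := by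
  have step : ∀ w : V, (∑ j, (dj G col j w) ^ 2)
      = ∑ v, ∑ u, (if v ∈ G.neighborFinset w ∧ u ∈ G.neighborFinset w ∧
          col s(w, v) = col s(w, u) then (1:ℕ) else 0) := by
    intro w
    rw [pairs_sq (G.neighborFinset w) (fun x => col s(w, x))]
    rfl
  calc (∑ v, ∑ u, monoc G col v u)
      = ∑ v, ∑ u, ∑ w, (if (G.Adj w v ∧ G.Adj w u) ∧ col s(w, v) = col s(w, u)
            then (1:ℕ) else 0) := by
        refine Finset.sum_congr rfl (fun v _ => Finset.sum_congr rfl (fun u _ => ?_))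
        rw [monoc, cmn, Finset.filter_filter, Finset.card_filter]
    _ = ∑ v, ∑ w, ∑ u, (if (G.Adj w v ∧ G.Adj w u) ∧ col s(w, v) = col s(w, u)
            then (1:ℕ) else 0) :=
        Finset.sum_congr rfl (fun v _ => Finset.sum_comm)
    _ = ∑ w, ∑ v, ∑ u, (if (G.Adj w v ∧ G.Adj w u) ∧ col s(w, v) = col s(w, u)
            then (1:ℕ) else 0) := Finset.sum_comm
    _ = ∑ w, ∑ j, (dj G col j w) ^ 2 := by
        refine Finset.sum_congr rfl (fun w _ => ?_)
        rw [step w]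
        refine Finset.sum_congr rfl (fun v _ => Finset.sum_congr rfl (fun u _ => ?_))
        refine if_congr ?_ rfl rfl
        simp [SimpleGraph.mem_neighborFinset, and_assoc]
    _ = ∑ j, S G col j := by
        rw [Finset.sum_comm]; rfl


lemma monoc_diag (v : V) : monoc G col v v = G.degree v := by
  rw [monoc, Finset.filter_true_of_mem (fun w _ => rfl), ← G.card_neighborFinset_eq_degree v]
  congr 1
  ext w
  simp [cmn, SimpleGraph.mem_neighborFinset, G.adj_comm, and_self]

lemma mt_bound :
    (∑ v, ∑ u ∈ G.neighborFinset v, monoc G col v u) + 2 * G.edgeFinset.card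
      ≤ ∑ j, S G col j := by
  have h1 : (∑ v, ∑ u ∈ G.neighborFinset v, monoc G col v u)
      ≤ ∑ v, ∑ u ∈ univ.erase v, monoc G col v u := by
    refine Finset.sum_le_sum (fun v _ => Finset.sum_le_sum_of_subset ?_)
    intro u hu
    rw [SimpleGraph.mem_neighborFinset] at hu
    exact Finset.mem_erase.2 ⟨hu.ne', mem_univ u⟩
  have h2 : (∑ v, (monoc G col v v + ∑ u ∈ univ.erase v, monoc G col v u))
      = ∑ v, ∑ u, monoc G col v u :=
    Finset.sum_congr rfl (fun v _ => Finset.add_sum_erase _ _ (mem_univ v))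
  have h4 : (∑ v, monoc G col v v) = 2 * G.edgeFinset.card := by
    rw [← G.sum_degrees_eq_twice_card_edges]
    exact Finset.sum_congr rfl fun v _ => monoc_diag G col v
  have h5 : (∑ v, (monoc G col v v + ∑ u ∈ univ.erase v, monoc G col v u))
      = (∑ v, monoc G col v v) + ∑ v, ∑ u ∈ univ.erase v, monoc G col v u :=
    Finset.sum_add_distrib
  have h3 := full_eq G col
  omega

lemma wt_classes (F : V → V → ℕ) :
    (∑ v, ∑ u ∈ G.neighborFinset v, F v u)
      = ∑ j, ∑ v, ∑ u ∈ Nd G col j v, F v u := by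
  rw [Finset.sum_comm]
  refine Finset.sum_congr rfl (fun v _ => ?_)
  exact (Finset.sum_fiberwise_of_maps_to (g := fun u => col s(v, u)) (t := univ)
    (fun u _ => mem_univ _) _).symm

lemma src_le_n {v u : V} (hne : u ≠ v) :
    src G col v u + 2 ≤ Fintype.card V := by
  have hsub : (cmn G v u).filter (fun w => ¬ col s(w, v) = col s(w, u))
      ⊆ (univ.erase v).erase u := by
    intro w hw
    simp only [Finset.mem_filter, cmn, Finset.mem_univ, true_and] at hw
    obtain ⟨⟨hwv, hwu⟩, -⟩ := hw
    exact Finset.mem_erase.2 ⟨hwu.ne, Finset.mem_erase.2 ⟨hwv.ne, mem_univ w⟩⟩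
  have h1 := Finset.card_le_card hsub
  have h2 : ((univ.erase v).erase u).card = Fintype.card V - 1 - 1 := by
    rw [Finset.card_erase_of_mem (Finset.mem_erase.2 ⟨hne, mem_univ u⟩),
      Finset.card_erase_of_mem (mem_univ v), Finset.card_univ]
  have h3 : 1 < Fintype.card V := Fintype.one_lt_card_iff_nontrivial.2 ⟨⟨u, v, hne⟩⟩
  rw [src]
  omega

lemma src_le_dj (hNRT : ∀ x y z : V, G.Adj x y → G.Adj y z → G.Adj x z →
      col s(x, y) = col s(y, z) ∨ col s(y, z) = col s(x, z) ∨ col s(x, y) = col s(x, z))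
    {j : ι} {v u : V} (hu : u ∈ Nd G col j v) :
    src G col v u + 2 ≤ dj G col j v + dj G col j u := by
  obtain ⟨hadj, hcol⟩ := (mem_Nd G col).1 hu
  have hv' : v ∈ Nd G col j u := (Nd_symm G col).1 hu
  have hsub : (cmn G v u).filter (fun w => ¬ col s(w, v) = col s(w, u))
      ⊆ ((Nd G col j v).erase u) ∪ ((Nd G col j u).erase v) := by
    intro w hw
    simp only [Finset.mem_filter, cmn, Finset.mem_univ, true_and] at hw
    obtain ⟨⟨hwv, hwu⟩, hne⟩ := hw
    rcases hNRT v u w hadj hwu.symm hwv.symm with h | h | h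
    · refine Finset.mem_union_right _ (Finset.mem_erase.2 ⟨hwv.ne, ?_⟩)
      rw [mem_Nd]
      exact ⟨hwu.symm, by rw [← h]; exact hcol⟩
    · exact absurd (by
        rw [show s(w, v) = s(v, w) from Sym2.eq_swap,
          show s(w, u) = s(u, w) from Sym2.eq_swap]
        exact h.symm) hne
    · refine Finset.mem_union_left _ (Finset.mem_erase.2 ⟨hwu.ne, ?_⟩)
      rw [mem_Nd]
      exact ⟨hwv.symm, by rw [← h]; exact hcol⟩
  have h1 := Finset.card_le_card hsub
  have h2 := Finset.card_union_le ((Nd G col j v).erase u) ((Nd G col j u).erase v)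
  have h3 : ((Nd G col j v).erase u).card = dj G col j v - 1 :=
    Finset.card_erase_of_mem hu
  have h4 : ((Nd G col j u).erase v).card = dj G col j u - 1 :=
    Finset.card_erase_of_mem hv'
  have h5 : 1 ≤ dj G col j v := Finset.card_pos.2 ⟨u, hu⟩
  have h6 : 1 ≤ dj G col j u := Finset.card_pos.2 ⟨v, hv'⟩
  rw [src]
  omega

lemma dj_add_le {j : ι} {v u : V} (hu : u ∈ Nd G col j v) :
    dj G col j v + dj G col j u ≤ mE G col j + 1 := by
  obtain ⟨hadj, hcol⟩ := (mem_Nd G col).1 hu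
  have hinjv : Set.InjOn (fun w => s(v, w)) (Nd G col j v) :=
    fun a _ b _ h => Sym2.congr_right.1 h
  have hinju : Set.InjOn (fun w => s(u, w)) (Nd G col j u) :=
    fun a _ b _ h => Sym2.congr_right.1 h
  have hcv : ((Nd G col j v).image (fun w => s(v, w))).card = dj G col j v :=
    Finset.card_image_of_injOn hinjv
  have hcu : ((Nd G col j u).image (fun w => s(u, w))).card = dj G col j u :=
    Finset.card_image_of_injOn hinju
  have hsubU : ((Nd G col j v).image (fun w => s(v, w)))
      ∪ ((Nd G col j u).image (fun w => s(u, w)))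
      ⊆ G.edgeFinset.filter (fun e => col e = j) := by
    intro x hx
    rcases Finset.mem_union.1 hx with hx | hx <;>
      obtain ⟨w, hw, rfl⟩ := Finset.mem_image.1 hx <;>
      rw [mem_Nd] at hw <;>
      exact Finset.mem_filter.2 ⟨SimpleGraph.mem_edgeFinset.2 ((SimpleGraph.mem_edgeSet G).2 hw.1), hw.2⟩
  have hsubI : ((Nd G col j v).image (fun w => s(v, w)))
      ∩ ((Nd G col j u).image (fun w => s(u, w))) ⊆ {s(v, u)} := by
    intro x hx
    obtain ⟨a, ha, hxa⟩ := Finset.mem_image.1 (Finset.mem_inter.1 hx).1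
    obtain ⟨b, hb, hxb⟩ := Finset.mem_image.1 (Finset.mem_inter.1 hx).2
    rw [← hxa] at hxb
    rcases Sym2.eq_iff.1 hxb with ⟨h1, h2⟩ | ⟨h1, h2⟩
    · exact absurd h1.symm hadj.ne
    · rw [Finset.mem_singleton, ← hxa, ← h1]
  have hU := Finset.card_union_add_card_inter
    ((Nd G col j v).image (fun w => s(v, w))) ((Nd G col j u).image (fun w => s(u, w)))
  have h1 : (((Nd G col j v).image (fun w => s(v, w)))
      ∪ ((Nd G col j u).image (fun w => s(u, w)))).card ≤ mE G col j :=
    Finset.card_le_card hsubU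
  have h2 : (((Nd G col j v).image (fun w => s(v, w)))
      ∩ ((Nd G col j u).image (fun w => s(u, w)))).card ≤ 1 :=
    le_trans (Finset.card_le_card hsubI) (by simp)
  omega

lemma dj_cap (j : ι) (v u : V) :
    dj G col j v + dj G col j u
      ≤ Fintype.card V + min (dj G col j v) (dj G col j u) := by
  have hU := Finset.card_union_add_card_inter (Nd G col j v) (Nd G col j u)
  have h2 : ((Nd G col j v) ∪ (Nd G col j u)).card ≤ Fintype.card V := by
    simpa using Finset.card_le_univ ((Nd G col j v) ∪ (Nd G col j u))
  have h3 : ((Nd G col j v) ∩ (Nd G col j u)).card ≤ min (dj G col j v) (dj G col j u) :=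
    le_min (Finset.card_le_card Finset.inter_subset_left)
      (Finset.card_le_card Finset.inter_subset_right)
  have hU' : ((Nd G col j v) ∪ (Nd G col j u)).card + ((Nd G col j v) ∩ (Nd G col j u)).card
      = dj G col j v + dj G col j u := hU
  omega

lemma lower_bound :
    2 * (∑ v, (G.degree v) ^ 2)
      ≤ 2 * G.edgeFinset.card * Fintype.card V
        + ∑ v, ∑ u ∈ G.neighborFinset v, cdg G v u := by
  have hsum : (∑ v, ∑ u ∈ G.neighborFinset v, (G.degree v + G.degree u))
      ≤ ∑ v, ∑ u ∈ G.neighborFinset v, (Fintype.card V + cdg G v u) :=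
    Finset.sum_le_sum fun v _ => Finset.sum_le_sum (fun u _ => deg_le_cdg G v u)
  have hL1 : (∑ v, ∑ u ∈ G.neighborFinset v, G.degree v) = ∑ v, (G.degree v) ^ 2 := by
    refine Finset.sum_congr rfl fun v _ => ?_
    rw [Finset.sum_const, G.card_neighborFinset_eq_degree, smul_eq_mul, sq]
  have hcomm : ∀ x y : V, x ∈ (univ : Finset V) ∧ y ∈ G.neighborFinset x
      ↔ x ∈ G.neighborFinset y ∧ y ∈ (univ : Finset V) := by
    intro x y
    simp only [Finset.mem_univ, true_and, and_true, SimpleGraph.mem_neighborFinset]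
    exact G.adj_comm x y
  have hL2 : (∑ v, ∑ u ∈ G.neighborFinset v, G.degree u) = ∑ v, (G.degree v) ^ 2 := by
    rw [Finset.sum_comm' hcomm]
    refine Finset.sum_congr rfl fun u _ => ?_
    rw [Finset.sum_const, G.card_neighborFinset_eq_degree, smul_eq_mul, sq]
  have hR1 : (∑ v, ∑ u ∈ G.neighborFinset v, Fintype.card V)
      = 2 * G.edgeFinset.card * Fintype.card V := by
    calc (∑ v, ∑ u ∈ G.neighborFinset v, Fintype.card V)
        = ∑ v, G.degree v * Fintype.card V :=
          Finset.sum_congr rfl fun v _ => by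
            rw [Finset.sum_const, G.card_neighborFinset_eq_degree, smul_eq_mul, mul_comm]
      _ = (∑ v, G.degree v) * Fintype.card V := (Finset.sum_mul _ _ _).symm
      _ = 2 * G.edgeFinset.card * Fintype.card V := by
          rw [G.sum_degrees_eq_twice_card_edges]
  have hA : (∑ v, ∑ u ∈ G.neighborFinset v, (G.degree v + G.degree u))
      = (∑ v, ∑ u ∈ G.neighborFinset v, G.degree v)
        + ∑ v, ∑ u ∈ G.neighborFinset v, G.degree u := by
    rw [← Finset.sum_add_distrib]
    exact Finset.sum_congr rfl fun v _ => Finset.sum_add_distrib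
  have hB : (∑ v, ∑ u ∈ G.neighborFinset v, (Fintype.card V + cdg G v u))
      = (∑ v, ∑ u ∈ G.neighborFinset v, Fintype.card V)
        + ∑ v, ∑ u ∈ G.neighborFinset v, cdg G v u := by
    rw [← Finset.sum_add_distrib]
    exact Finset.sum_congr rfl fun v _ => Finset.sum_add_distrib
  omega


section IntLemmas

lemma intCase1 (S W n m : ℤ) (h2S : 2 * S ≤ 2 * m * (m + 1))
    (hW : W ≤ 2 * S - 2 * m * 2) (hprod : 0 ≤ (3 * m - n) * (n + 1 - m)) :
    S + W ≤ 4 * n * m + 2 * m - n ^ 2 - n := by nlinarith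

lemma int1 (n m : ℤ) (h0 : 0 ≤ n) (h2 : n + 2 ≤ m) (h24 : 24 * m + 4 * n ≤ 3 * n ^ 2) :
    11 ≤ n := by
  by_contra hc
  push_neg at hc
  nlinarith [mul_nonneg (by linarith : (0:ℤ) ≤ 10 - n) h0]

lemma int2 (n m : ℤ) (hA : (m - n) ^ 2 ≤ 4 * n + 5 * (m - n)) (h2 : n + 2 ≤ m) :
    2 * m * (m + 1 - n) ≤ 2 * (n * m + 6 * m - n ^ 2 - n) := by nlinarith

lemma int3 (n m : ℤ) (h2 : n + 2 ≤ m) (h11 : 11 ≤ n) :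
    0 ≤ n * m + 6 * m - n ^ 2 - n := by nlinarith

lemma int4 (n m : ℤ) (hB : 4 * n + 5 * (m - n) + 1 ≤ (m - n) ^ 2)
    (h2 : n + 2 ≤ m) (h24 : 24 * m + 4 * n ≤ 3 * n ^ 2) (h11 : 11 ≤ n) :
    2 * m ^ 3 ≤ (n * m + 6 * m - n ^ 2 - n) ^ 2 := by
  rcases le_or_gt (m - n) n with hbn | hbn
  · have h4 : 4 * n ≤ (m - n) ^ 2 := by nlinarith
    have k1 : 4 * n ^ 3 ≤ n ^ 2 * (m - n) ^ 2 := by nlinarith [sq_nonneg n]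
    have k2 : (m - n) ^ 3 ≤ n * (m - n) ^ 2 := by nlinarith [sq_nonneg (m - n)]
    nlinarith [k1, k2, sq_nonneg (m - n), mul_nonneg (mul_nonneg
      (by linarith : (0:ℤ) ≤ m - n) (by linarith : (0:ℤ) ≤ m - n))
      (by linarith : (0:ℤ) ≤ n)]
  · have hm2n : 2 * n + 1 ≤ m := by linarith
    have h8m : 8 * m ≤ n ^ 2 := by linarith
    have hnm : n * m ≤ 2 * (n * m + 6 * m - n ^ 2 - n) := by nlinarith
    have h1 : 8 * m * m ^ 2 ≤ n ^ 2 * m ^ 2 :=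
      mul_le_mul_of_nonneg_right h8m (sq_nonneg m)
    nlinarith [hnm, h1, mul_nonneg (mul_nonneg (by linarith : (0:ℤ) ≤ n)
      (by linarith : (0:ℤ) ≤ m)) (int3 n m h2 h11)]

lemma intFinal (n c e D2 : ℤ) (hn1 : 1 ≤ n) (hc1 : 1 ≤ c) (h9 : 9 * n ≤ 8 * c)
    (hbig : 2 * D2 ≤ 6 * e * n - c * (n ^ 2 + n)) (hcs : 4 * e ^ 2 ≤ n * D2) :
    False := by
  have hn2 : (1 : ℤ) ≤ n ^ 2 := by nlinarith
  have hcn2 : (1 : ℤ) ≤ c * n ^ 2 := by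
    have := mul_le_mul_of_nonneg_right hc1 (by positivity : (0:ℤ) ≤ n ^ 2)
    linarith
  nlinarith [hbig, hcs, h9, hn1, hc1, hcn2,
    sq_nonneg (8 * e - 3 * n ^ 2),
    mul_le_mul_of_nonneg_left hbig (by linarith : (0:ℤ) ≤ n),
    mul_le_mul_of_nonneg_right h9 (by positivity : (0:ℤ) ≤ n ^ 3)]

lemma int5 (Vo C : ℤ) (hV : 0 ≤ Vo) (hC : 0 ≤ C) (h : Vo ^ 2 ≤ 4 * C ^ 2) :
    Vo ≤ 2 * C := by nlinarith [sq_nonneg (Vo - 2 * C), sq_nonneg (Vo + 2 * C)]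

end IntLemmas

/-- The per-colour-class estimate, abstracted. `N` is the coloured neighbourhood map,
`d` its degrees, `m` the class size, `w` the per-edge weight (count of non-mono common
neighbours). -/
lemma perclass (n m : ℕ) (N : V → Finset V) (d : V → ℕ) (w : V → V → ℕ)
    (hd : ∀ v, (N v).card = d v)
    (hsym : ∀ v u : V, u ∈ N v ↔ v ∈ N u)
    (hH : ∑ v, d v = 2 * m)
    (hx : ∀ v u, u ∈ N v → d v + d u ≤ m + 1)
    (hcap : ∀ v u, u ∈ N v → d v + d u ≤ n + min (d v) (d u))
    (hw1 : ∀ v u, u ∈ N v → w v u + 2 ≤ n)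
    (hw2 : ∀ v u, u ∈ N v → w v u + 2 ≤ d v + d u)
    (hm3 : n ≤ 3 * m) (hm24 : 24 * m + 4 * n ≤ 3 * n ^ 2) :
    ((∑ v, (d v : ℤ) ^ 2) + ∑ v, ∑ u ∈ N v, (w v u : ℤ))
      ≤ 4 * n * m + 2 * m - n ^ 2 - n := by
  classical
  set S : ℤ := ∑ v, (d v : ℤ) ^ 2 with hSdef
  set W : ℤ := ∑ v, ∑ u ∈ N v, (w v u : ℤ) with hWdef
  have hcomm : ∀ x y : V, x ∈ (univ : Finset V) ∧ y ∈ N x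
      ↔ x ∈ N y ∧ y ∈ (univ : Finset V) := by
    intro x y
    simp only [Finset.mem_univ, true_and, and_true]
    exact hsym x y
  have hSx : (∑ v, ∑ u ∈ N v, (d v : ℤ)) = S := by
    refine Finset.sum_congr rfl fun v _ => ?_
    rw [Finset.sum_const, hd v, nsmul_eq_mul, sq]
  have hSy : (∑ v, ∑ u ∈ N v, (d u : ℤ)) = S := by
    rw [Finset.sum_comm' hcomm]
    refine Finset.sum_congr rfl fun u _ => ?_
    rw [Finset.sum_const, hd u, nsmul_eq_mul, sq]
  have hCnt : (∑ v, ∑ u ∈ N v, (1 : ℤ)) = 2 * m := by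
    have : (∑ v, ∑ u ∈ N v, (1 : ℤ)) = ∑ v, (d v : ℤ) := by
      refine Finset.sum_congr rfl fun v _ => ?_
      rw [Finset.sum_const, hd v, nsmul_eq_mul, mul_one]
    rw [this, ← Nat.cast_sum]
    rw [hH]
    push_cast
    ring
  have hsumX : (∑ v, ∑ u ∈ N v, ((d v : ℤ) + (d u : ℤ))) = 2 * S := by
    have : (∑ v, ∑ u ∈ N v, ((d v : ℤ) + (d u : ℤ)))
        = (∑ v, ∑ u ∈ N v, (d v : ℤ)) + (∑ v, ∑ u ∈ N v, (d u : ℤ)) := by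
      rw [← Finset.sum_add_distrib]
      exact Finset.sum_congr rfl fun v _ => Finset.sum_add_distrib
    rw [this, hSx, hSy]; ring
  have hconst : ∀ c : ℤ, (∑ v, ∑ u ∈ N v, c) = 2 * m * c := by
    intro c
    have h1 : ∀ v, (∑ u ∈ N v, c) = (d v : ℤ) * c := fun v => by
      rw [Finset.sum_const, hd v, nsmul_eq_mul]
    rw [Finset.sum_congr rfl (fun v _ => h1 v), ← Finset.sum_mul, ← Nat.cast_sum, hH]
    push_cast; ring
  rcases le_or_gt m (n + 1) with hm1 | hm1
  · -- small class : `S + W ≤ 3 m (m-1)` and `(3m-n)(m-n-1) ≤ 0`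
    have h2S : 2 * S ≤ 2 * m * ((m : ℤ) + 1) := by
      rw [← hsumX, ← hconst ((m : ℤ) + 1)]
      refine Finset.sum_le_sum fun v _ => Finset.sum_le_sum fun u hu => ?_
      have := hx v u hu
      push_cast
      exact_mod_cast Nat.cast_le.2 this
    have hW : W ≤ 2 * S - 2 * (m : ℤ) * 2 := by
      have step : W ≤ ∑ v, ∑ u ∈ N v, ((d v : ℤ) + d u - 2) := by
        rw [hWdef]
        refine Finset.sum_le_sum fun v _ => Finset.sum_le_sum fun u hu => ?_
        have h2 : ((w v u : ℤ) + 2) ≤ (d v : ℤ) + d u := by exact_mod_cast hw2 v u hu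
        linarith
      have split : (∑ v, ∑ u ∈ N v, ((d v : ℤ) + d u - 2))
          = (∑ v, ∑ u ∈ N v, ((d v : ℤ) + d u)) - (∑ v, ∑ u ∈ N v, (2 : ℤ)) := by
        rw [← Finset.sum_sub_distrib]
        exact Finset.sum_congr rfl fun v _ => Finset.sum_sub_distrib _ _
      rw [split, hsumX, hconst 2] at step
      exact step
    have hfac : (0 : ℤ) ≤ (3 * m - n) ∧ (m : ℤ) ≤ n + 1 := by
      constructor
      · have : (n : ℤ) ≤ 3 * m := by exact_mod_cast hm3
        linarith
      · exact_mod_cast hm1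
    have hprod : (0 : ℤ) ≤ (3 * (m : ℤ) - n) * ((n : ℤ) + 1 - m) :=
      mul_nonneg hfac.1 (by linarith [hfac.2])
    exact intCase1 S W n m h2S hW hprod
  · -- large class : m ≥ n + 2
    have hm2 : (n : ℤ) + 2 ≤ (m : ℤ) := by exact_mod_cast hm1
    -- derive n ≥ 11
    have hm24' : 24 * (m : ℤ) + 4 * n ≤ 3 * (n : ℤ) ^ 2 := by exact_mod_cast hm24
    have hn11 : (11 : ℤ) ≤ (n : ℤ) := int1 _ _ (by positivity) hm2 hm24'
    set Z : ℤ := ∑ v, ∑ u ∈ N v, max ((d v : ℤ) + (d u : ℤ) - n) 0 with hZdef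
    have hCH : 2 * S - 2 * (m : ℤ) * 2 ≤ 2 * (m : ℤ) * ((n : ℤ) - 2) + Z := by
      have step : (∑ v, ∑ u ∈ N v, ((d v : ℤ) + d u - 2))
          ≤ ∑ v, ∑ u ∈ N v, (((n : ℤ) - 2) + max ((d v : ℤ) + (d u : ℤ) - n) 0) := by
        refine Finset.sum_le_sum fun v _ => Finset.sum_le_sum fun u _ => ?_
        have := le_max_left ((d v : ℤ) + (d u : ℤ) - n) 0
        linarith
      have splitL : (∑ v, ∑ u ∈ N v, ((d v : ℤ) + d u - 2))
          = (∑ v, ∑ u ∈ N v, ((d v : ℤ) + d u)) - (∑ v, ∑ u ∈ N v, (2 : ℤ)) := by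
        rw [← Finset.sum_sub_distrib]
        exact Finset.sum_congr rfl fun v _ => Finset.sum_sub_distrib _ _
      have splitR : (∑ v, ∑ u ∈ N v, (((n : ℤ) - 2) + max ((d v : ℤ) + (d u : ℤ) - n) 0))
          = (∑ v, ∑ u ∈ N v, ((n : ℤ) - 2))
            + (∑ v, ∑ u ∈ N v, max ((d v : ℤ) + (d u : ℤ) - n) 0) := by
        rw [← Finset.sum_add_distrib]
        exact Finset.sum_congr rfl fun v _ => Finset.sum_add_distrib
      rw [splitL, splitR, hsumX, hconst 2, hconst ((n : ℤ) - 2), ← hZdef] at step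
      linarith
    have hW : W ≤ 2 * (m : ℤ) * ((n : ℤ) - 2) := by
      rw [hWdef, ← hconst ((n : ℤ) - 2)]
      refine Finset.sum_le_sum fun v _ => Finset.sum_le_sum fun u hu => ?_
      have := hw1 v u hu
      have h2 : ((w v u : ℤ) + 2) ≤ (n : ℤ) := by exact_mod_cast this
      linarith
    -- the key bound `Z ≤ 2 * C`
    set C : ℤ := (n : ℤ) * m + 6 * m - (n : ℤ) ^ 2 - n with hCdef
    have hZC : Z ≤ 2 * C := by
      rcases le_or_gt (((m : ℤ) - n) ^ 2) (4 * n + 5 * ((m : ℤ) - n)) with hA | hB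
      · -- pointwise bound
        have hZp : Z ≤ 2 * (m : ℤ) * ((m : ℤ) + 1 - n) := by
          rw [hZdef, ← hconst ((m : ℤ) + 1 - n)]
          refine Finset.sum_le_sum fun v _ => Finset.sum_le_sum fun u hu => ?_
          apply max_le
          · have := hx v u hu
            have h2 : ((d v : ℤ) + d u) ≤ (m : ℤ) + 1 := by exact_mod_cast this
            linarith
          · linarith [hm2, hn11]
        have : 2 * (m : ℤ) * ((m : ℤ) + 1 - n) ≤ 2 * C := by
          rw [hCdef]; exact int2 _ _ hA hm2
        linarith
      · -- Cauchy-Schwarz route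
        set Vo : ℤ := ∑ v, ∑ u ∈ N v, (min (d v) (d u) : ℤ) with hVodef
        have hZV : Z ≤ Vo := by
          rw [hZdef, hVodef]
          refine Finset.sum_le_sum fun v _ => Finset.sum_le_sum fun u hu => ?_
          apply max_le
          · have := hcap v u hu
            have h2 : ((d v : ℤ) + d u) ≤ (n : ℤ) + (min (d v) (d u) : ℕ) := by
              exact_mod_cast this
            linarith
          · positivity
        have hVnn : (0 : ℤ) ≤ Vo := by
          rw [hVodef]
          refine Finset.sum_nonneg fun v _ => Finset.sum_nonneg fun u _ => by positivity
        have hVo2 : Vo ^ 2 ≤ 8 * (m : ℤ) ^ 3 := by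
          have hQ : Vo = ∑ x ∈ (univ : Finset V).sigma N, (min (d x.1) (d x.2) : ℤ) := by
            rw [hVodef]
            exact Finset.sum_sigma' univ N (fun a b => (min (d a) (d b) : ℤ))
          have hQcard : ((univ : Finset V).sigma N).card = 2 * m := by
            rw [Finset.card_sigma]
            rw [Finset.sum_congr rfl (fun v _ => hd v)]
            exact hH
          have hCS := sq_sum_le_card_mul_sum_sq
            (s := (univ : Finset V).sigma N) (f := fun x => (min (d x.1) (d x.2) : ℤ))
          rw [← hQ, hQcard] at hCS
          have hsq : (∑ x ∈ (univ : Finset V).sigma N, ((min (d x.1) (d x.2) : ℤ)) ^ 2)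
              ≤ ∑ x ∈ (univ : Finset V).sigma N, (d x.1 : ℤ) * (d x.2 : ℤ) := by
            refine Finset.sum_le_sum fun x _ => ?_
            have h1 : (min (d x.1) (d x.2) : ℤ) ≤ (d x.1 : ℤ) := by
              exact_mod_cast Nat.cast_le.2 (min_le_left _ _)
            have h2 : (min (d x.1) (d x.2) : ℤ) ≤ (d x.2 : ℤ) := by
              exact_mod_cast Nat.cast_le.2 (min_le_right _ _)
            have h0 : (0 : ℤ) ≤ (min (d x.1) (d x.2) : ℤ) := by positivity
            have h3 : (0 : ℤ) ≤ (d x.1 : ℤ) := by positivity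
            calc ((min (d x.1) (d x.2) : ℤ)) ^ 2
                = (min (d x.1) (d x.2) : ℤ) * (min (d x.1) (d x.2) : ℤ) := sq _
              _ ≤ (d x.1 : ℤ) * (d x.2 : ℤ) := mul_le_mul h1 h2 h0 h3
          have hdd : (∑ x ∈ (univ : Finset V).sigma N, (d x.1 : ℤ) * (d x.2 : ℤ))
              ≤ 4 * (m : ℤ) ^ 2 := by
            rw [← Finset.sum_sigma' univ N (fun a b => (d a : ℤ) * (d b : ℤ))]
            have hinner : ∀ v : V, (∑ u ∈ N v, (d u : ℤ)) ≤ 2 * m := by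
              intro v
              have hsub : (∑ u ∈ N v, (d u : ℤ)) ≤ ∑ u, (d u : ℤ) :=
                Finset.sum_le_sum_of_subset_of_nonneg (Finset.subset_univ _)
                  (fun u _ _ => by positivity)
              have : (∑ u, (d u : ℤ)) = 2 * m := by
                rw [← Nat.cast_sum, hH]; push_cast; ring
              linarith
            calc (∑ v, ∑ u ∈ N v, (d v : ℤ) * (d u : ℤ))
                = ∑ v, (d v : ℤ) * ∑ u ∈ N v, (d u : ℤ) := by
                  exact Finset.sum_congr rfl fun v _ => (Finset.mul_sum _ _ _).symm
              _ ≤ ∑ v, (d v : ℤ) * (2 * m) := by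
                  refine Finset.sum_le_sum fun v _ => ?_
                  exact mul_le_mul_of_nonneg_left (hinner v) (by positivity)
              _ = (∑ v, (d v : ℤ)) * (2 * m) := (Finset.sum_mul _ _ _).symm
              _ = 4 * (m : ℤ) ^ 2 := by
                  rw [← Nat.cast_sum, hH]; push_cast; ring
          calc Vo ^ 2 ≤ (2 * m : ℤ) * ∑ x ∈ (univ : Finset V).sigma N,
                ((min (d x.1) (d x.2) : ℤ)) ^ 2 := by exact_mod_cast hCS
            _ ≤ (2 * m : ℤ) * (4 * (m : ℤ) ^ 2) := by
                refine mul_le_mul_of_nonneg_left (le_trans hsq hdd) (by positivity)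
            _ = 8 * (m : ℤ) ^ 3 := by ring
        -- now `2 m^3 ≤ C^2` and `0 ≤ C`
        have hb1 : 4 * (n : ℤ) + 5 * ((m : ℤ) - n) + 1 ≤ ((m : ℤ) - n) ^ 2 := hB
        have hCpos : (0 : ℤ) ≤ C := by
          rw [hCdef]; exact int3 _ _ hm2 hn11
        have h2m3 : 2 * (m : ℤ) ^ 3 ≤ C ^ 2 := by
          rw [hCdef]; exact int4 _ _ hb1 hm2 hm24' hn11
        have hVle : Vo ≤ 2 * C := by
          refine int5 Vo C hVnn hCpos ?_
          nlinarith [hVo2, h2m3]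
        linarith [hZV, hVle]
    -- assemble case 2
    linarith [hCH, hW, hZC, hCdef.le, hCdef.ge]
end RTaux

open RTaux in
theorem stmt2' {V : Type*} [Fintype V] [DecidableEq V] [Nonempty V]
    (G : SimpleGraph V) [DecidableRel G.Adj]
    {ι : Type*} [Fintype ι] [DecidableEq ι] (col : Sym2 V → ι)
    (hnum : 9 * Fintype.card V ≤ 8 * Fintype.card ι)
    (hsize : ∀ i : ι, Fintype.card V ≤ 3 * mE G col i)
    (hNRT : ∀ x y z : V, G.Adj x y → G.Adj y z → G.Adj x z →
      col s(x, y) = col s(y, z) ∨ col s(y, z) = col s(x, z) ∨ col s(x, y) = col s(x, z)) :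
    False := by
  classical
  set n := Fintype.card V with hn
  set c := Fintype.card ι with hc
  set e := G.edgeFinset.card with he
  have hn1 : 1 ≤ n := Fintype.card_pos
  have hc1 : 1 ≤ c := by omega
  -- edges partition into colour classes
  have hpart : ∑ j, mE G col j = e := by
    rw [he, Finset.card_eq_sum_card_fiberwise (f := col) (t := univ) (fun x _ => mem_univ _)]
    rfl
  -- edge budget
  have hedge : 2 * e ≤ n * (n - 1) := by
    have h1 : e ≤ n.choose 2 := G.card_edgeFinset_le_card_choose_two
    have h2 : n.choose 2 = n * (n - 1) / 2 := Nat.choose_two_right n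
    have h3 : 2 * (n * (n - 1) / 2) ≤ n * (n - 1) := Nat.mul_div_le _ 2 |>.trans_eq rfl
    omega
  -- per-class budget : 24 * m_j + 4n ≤ 3n²
  have hm24 : ∀ j : ι, 24 * mE G col j + 4 * n ≤ 3 * n ^ 2 := by
    intro j
    have hsplit : mE G col j + ∑ i ∈ univ.erase j, mE G col i = e := by
      rw [← hpart]
      exact Finset.add_sum_erase _ _ (mem_univ j)
    have hlow : (univ.erase j).card * n ≤ ∑ i ∈ univ.erase j, 3 * mE G col i := by
      rw [← Finset.sum_const_nat (m := n) (fun x _ => rfl)]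
      exact Finset.sum_le_sum fun i _ => hsize i
    have hcard : (univ.erase j).card = c - 1 := by
      rw [Finset.card_erase_of_mem (mem_univ j), Finset.card_univ]
    have hsum3 : (∑ i ∈ univ.erase j, 3 * mE G col i) = 3 * ∑ i ∈ univ.erase j, mE G col i := by
      rw [Finset.mul_sum]
    -- (c-1) * n ≤ 3 * (e - m j), 9n ≤ 8c, 2e ≤ n(n-1)
    have h9 : 9 * n ≤ 8 * c := hnum
    have hkey : (c - 1) * n ≤ 3 * (e - mE G col j) := by
      rw [← hcard]
      calc (univ.erase j).card * n ≤ ∑ i ∈ univ.erase j, 3 * mE G col i := hlow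
        _ = 3 * ∑ i ∈ univ.erase j, mE G col i := hsum3
        _ = 3 * (e - mE G col j) := by omega
    -- now pure arithmetic (8 * the key inequality)
    have hme : mE G col j ≤ e := by omega
    have hkeyZ : ((c : ℤ) - 1) * n ≤ 3 * ((e : ℤ) - mE G col j) := by
      zify [hc1, hme] at hkey
      exact hkey
    have hedgeZ : 2 * (e : ℤ) ≤ (n : ℤ) * ((n : ℤ) - 1) := by
      zify [hn1] at hedge
      exact hedge
    have h9Z : 9 * (n : ℤ) ≤ 8 * (c : ℤ) := by exact_mod_cast h9
    have hgoal : 24 * (mE G col j : ℤ) + 4 * n ≤ 3 * (n : ℤ) ^ 2 := by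
      nlinarith [hkeyZ, hedgeZ, h9Z,
        mul_le_mul_of_nonneg_right h9Z (by positivity : (0:ℤ) ≤ (n : ℤ))]
    exact_mod_cast hgoal
  -- the three counting facts
  have hlow := lower_bound G
  have hTT : (∑ v, ∑ u ∈ G.neighborFinset v, cdg G v u)
      = (∑ v, ∑ u ∈ G.neighborFinset v, monoc G col v u)
        + ∑ v, ∑ u ∈ G.neighborFinset v, src G col v u := by
    rw [← Finset.sum_add_distrib]
    refine Finset.sum_congr rfl fun v _ => ?_
    rw [← Finset.sum_add_distrib]
    exact Finset.sum_congr rfl fun u _ => cdg_split G col v u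
  have hmt := mt_bound G col
  have hwc := wt_classes G col (src G col)
  -- per-class bound, summed
  have hper : ∀ j : ι, ((S G col j : ℤ) + ∑ v, ∑ u ∈ Nd G col j v, (src G col v u : ℤ))
      ≤ 4 * n * mE G col j + 2 * mE G col j - (n : ℤ) ^ 2 - n := by
    intro j
    have hS : ((S G col j : ℤ)) = ∑ v, ((dj G col j v : ℤ)) ^ 2 := by
      rw [S]; push_cast; rfl
    rw [hS]
    exact perclass n (mE G col j) (Nd G col j) (dj G col j) (src G col)
      (fun v => rfl) (fun v u => Nd_symm G col) (sum_dj G col j)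
      (fun v u hu => dj_add_le G col hu)
      (fun v u _ => dj_cap G col j v u)
      (fun v u hu => src_le_n G col (((mem_Nd G col).1 hu).1.ne'))
      (fun v u hu => src_le_dj G col hNRT hu)
      (hsize j) (hm24 j)
  -- assemble in ℤ
  set D2 : ℕ := ∑ v, (G.degree v) ^ 2 with hD2
  set MTn : ℕ := ∑ v, ∑ u ∈ G.neighborFinset v, monoc G col v u with hMTn
  set WTn : ℕ := ∑ v, ∑ u ∈ G.neighborFinset v, src G col v u with hWTn
  have hlowZ : 2 * (D2 : ℤ) ≤ 2 * e * n + ((MTn : ℤ) + (WTn : ℤ)) := by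
    have h2 := hlow
    rw [hTT] at h2
    exact_mod_cast h2
  have hmtZ : (MTn : ℤ) + 2 * e ≤ ∑ j, (S G col j : ℤ) := by
    have h2 : ((MTn + 2 * e : ℕ) : ℤ) ≤ ((∑ j, S G col j : ℕ) : ℤ) := by exact_mod_cast hmt
    push_cast at h2
    push_cast
    linarith
  have hwcZ : (WTn : ℤ) = ∑ j, ((∑ v, ∑ u ∈ Nd G col j v, src G col v u : ℕ) : ℤ) := by
    have h2 : ((WTn : ℕ) : ℤ) = ((∑ j, ∑ v, ∑ u ∈ Nd G col j v, src G col v u : ℕ) : ℤ) := by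
      exact_mod_cast congrArg (Nat.cast : ℕ → ℤ) hwc
    rw [h2]
    push_cast
    rfl
  have hperZ : ∀ j : ι, (S G col j : ℤ)
      + ((∑ v, ∑ u ∈ Nd G col j v, src G col v u : ℕ) : ℤ)
      ≤ 4 * n * mE G col j + 2 * mE G col j - (n : ℤ) ^ 2 - n := by
    intro j
    have hc2 : ((∑ v, ∑ u ∈ Nd G col j v, src G col v u : ℕ) : ℤ)
        = ∑ v, ∑ u ∈ Nd G col j v, (src G col v u : ℤ) := by push_cast; rfl
    rw [hc2]
    exact hper j
  have hsum_per : (∑ j, (S G col j : ℤ))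
      + (∑ j, ((∑ v, ∑ u ∈ Nd G col j v, src G col v u : ℕ) : ℤ))
      ≤ (4 * n + 2) * (e : ℤ) - (c : ℤ) * ((n : ℤ) ^ 2 + n) := by
    have h1 : (∑ j, ((S G col j : ℤ)
        + ((∑ v, ∑ u ∈ Nd G col j v, src G col v u : ℕ) : ℤ)))
        ≤ ∑ j, ((4 * n + 2) * (mE G col j : ℤ) - ((n : ℤ) ^ 2 + n)) := by
      refine Finset.sum_le_sum fun j _ => ?_
      have := hperZ j
      linarith
    have h2 : (∑ j, ((S G col j : ℤ)
        + ((∑ v, ∑ u ∈ Nd G col j v, src G col v u : ℕ) : ℤ)))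
        = (∑ j, (S G col j : ℤ))
          + ∑ j, ((∑ v, ∑ u ∈ Nd G col j v, src G col v u : ℕ) : ℤ) :=
      Finset.sum_add_distrib
    have h3 : (∑ j, ((4 * n + 2) * (mE G col j : ℤ) - ((n : ℤ) ^ 2 + n)))
        = (4 * n + 2) * (e : ℤ) - (c : ℤ) * ((n : ℤ) ^ 2 + n) := by
      rw [Finset.sum_sub_distrib, ← Finset.mul_sum, Finset.sum_const, Finset.card_univ, ← hc]
      have h4 : (∑ j, (mE G col j : ℤ)) = (e : ℤ) := by
        rw [← Nat.cast_sum, hpart]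
      rw [h4, nsmul_eq_mul]
    rw [h2] at h1
    rw [h3] at h1
    exact h1
  have hbig : 2 * (D2 : ℤ) ≤ 6 * e * n - (c : ℤ) * ((n : ℤ) ^ 2 + n) := by
    rw [hwcZ] at hlowZ
    linarith [hlowZ, hmtZ, hsum_per]
  -- Cauchy-Schwarz
  have hcs : (4 : ℤ) * (e : ℤ) ^ 2 ≤ (n : ℤ) * D2 := by
    have h := sq_sum_le_card_mul_sum_sq (s := (univ : Finset V))
      (f := fun v => (G.degree v : ℤ))
    have hdeg : (∑ v, (G.degree v : ℤ)) = 2 * e := by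
      have h2 := G.sum_degrees_eq_twice_card_edges
      rw [he]
      exact_mod_cast h2
    have hD2c : (∑ v, ((G.degree v : ℤ)) ^ 2) = (D2 : ℤ) := by
      rw [hD2]; push_cast; rfl
    rw [hdeg, hD2c, Finset.card_univ, ← hn] at h
    nlinarith [h]
  -- final contradiction
  have h9Z : 9 * (n : ℤ) ≤ 8 * (c : ℤ) := by exact_mod_cast hnum
  have hn1Z : (1 : ℤ) ≤ n := by exact_mod_cast hn1
  have hc1Z : (1 : ℤ) ≤ c := by exact_mod_cast hc1
  exact intFinal n c e D2 hn1Z hc1Z h9Z hbig hcs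

/-- An edge-coloured graph on `n ≥ 1` vertices with at least `(9/8)n`
colour classes, each of size at least `n/3`, contains a rainbow triangle. -/
theorem stmt2 {V : Type*} [Fintype V] [DecidableEq V] [Nonempty V]
    (G : SimpleGraph V) [DecidableRel G.Adj] (n : ℕ) (hn : n = Fintype.card V)
    {ι : Type*} [Fintype ι] [DecidableEq ι] (col : Sym2 V → ι)
    (hnum : 9 * n ≤ 8 * Fintype.card ι)
    (hsize : ∀ i : ι, n ≤ 3 * (G.edgeFinset.filter (fun e => col e = i)).card) :
    ∃ x y z : V, G.Adj x y ∧ G.Adj y z ∧ G.Adj x z ∧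
      col s(x, y) ≠ col s(y, z) ∧ col s(y, z) ≠ col s(x, z) ∧ col s(x, y) ≠ col s(x, z) := by
  classical
  subst hn
  by_contra hcon
  push_neg at hcon
  refine stmt2' G col hnum (fun i => hsize i) ?_
  intro x y z h1 h2 h3
  by_cases e1 : col s(x, y) = col s(y, z)
  · exact Or.inl e1
  by_cases e2 : col s(y, z) = col s(x, z)
  · exact Or.inr (Or.inl e2)
  · exact Or.inr (Or.inr (hcon x y z h1 h2 h3 e1 e2))
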